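/- (Cut-slice correspondence.) Let (Q,C) be a truncated quiver such that Q is connected. Then the assignment S ↦ C_S := Q₁ \ π(S₁) induces a bijection from the set of slices of ℤ(Q,C) modulo the action of τ (identifying a slice S with τ^ℓ S for all ℓ ∈ ℤ) to the set {C' ⊆ Q₁ : C' is compatible with C}. Moreover, for every slice S, the covering morphism π induces an isomorphism of quivers from S to Q_{C_S}. -/

import Mathlib

/-- A quiver given by a (finite) set of vertices `V`, a set of arrows `A`,
and source/target maps `s`, `t`. -/
structure PreQuiver where
  V : Type
  A : Type
  s : A → V
  t : A → V

namespace PreQuiver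

variable (Q : PreQuiver)

/-- A step of a walk: an arrow of the double quiver, i.e. an arrow of `Q`
together with an orientation (`true` = the arrow itself, `false` = its formal inverse). -/
abbrev Step := Q.A × Bool

/-- The source of a step in the double quiver. -/
def stepSrc (e : Q.Step) : Q.V := if e.2 then Q.s e.1 else Q.t e.1

/-- The target of a step in the double quiver. -/
def stepTgt (e : Q.Step) : Q.V := if e.2 then Q.t e.1 else Q.s e.1

/-- `Q.IsWalk x y l` : the list of steps `l` is a walk from `x` to `y`
(i.e. a path in the double quiver). -/
def IsWalk : Q.V → Q.V → List Q.Step → Prop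
  | x, y, [] => x = y
  | x, y, e :: l => Q.stepSrc e = x ∧ IsWalk (Q.stepTgt e) y l

/-- `Q.IsPath x y l` : the list of arrows `l` is a path of arrows from `x` to `y`. -/
def IsPath : Q.V → Q.V → List Q.A → Prop
  | x, y, [] => x = y
  | x, y, a :: l => Q.s a = x ∧ IsPath (Q.t a) y l

/-- The degree `g_C(a)` of an arrow: `1` if `a ∈ C` and `0` otherwise. -/
noncomputable def gA (C : Set Q.A) (a : Q.A) : ℤ :=
  haveI := Classical.propDecidable (a ∈ C)
  if a ∈ C then 1 else 0

/-- The degree of a step: `g_C(a)` for `a` and `-g_C(a)` for `a⁻¹`. -/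
noncomputable def gStep (C : Set Q.A) (e : Q.Step) : ℤ :=
  if e.2 then Q.gA C e.1 else -Q.gA C e.1

/-- The degree `g_C(p)` of a walk, extended additively. -/
noncomputable def gWalk (C : Set Q.A) (l : List Q.Step) : ℤ := (l.map (Q.gStep C)).sum

/-- The degree `g_C(p)` of a path of arrows. -/
noncomputable def gPath (C : Set Q.A) (l : List Q.A) : ℤ := (l.map (Q.gA C)).sum

/-- Two sets of arrows are compatible if they give every cyclic walk the same degree. -/
def Compatible (C C' : Set Q.A) : Prop :=
  ∀ (x : Q.V) (l : List Q.Step), Q.IsWalk x x l → Q.gWalk C l = Q.gWalk C' l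

/-- A quiver is connected if any two vertices are joined by a walk. -/
def Connected : Prop := ∀ x y : Q.V, ∃ l : List Q.Step, Q.IsWalk x y l

/-- The covering quiver `ℤ(Q,C)`: vertices `Q₀ × ℤ`; for an arrow `a : x → y` and `ℓ ∈ ℤ`,
an arrow `(a,ℓ) : (x,ℓ) → (y,ℓ)` if `a ∉ C` and `(a,ℓ) : (x,ℓ) → (y,ℓ-1)` if `a ∈ C`. -/
noncomputable def cover (C : Set Q.A) : PreQuiver where
  V := Q.V × ℤ
  A := Q.A × ℤ
  s := fun e => (Q.s e.1, e.2)
  t := fun e => (Q.t e.1, e.2 - Q.gA C e.1)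

end PreQuiver

namespace PreQuiver

variable (Q : PreQuiver)

/-- The arrows of the full subquiver of `ℤ(Q,C)` on a set `S` of vertices:
those arrows with both endpoints in `S`. -/
noncomputable def sliceArrows (C : Set Q.A) (S : Set (Q.V × ℤ)) : Set (Q.A × ℤ) :=
  {e : Q.A × ℤ | (Q.cover C).s e ∈ S ∧ (Q.cover C).t e ∈ S}

/-- `S` determines a slice of `ℤ(Q,C)`: every `τ`-orbit of vertices meets `S` exactly once, and
for every arrow of `ℤ(Q,C)` starting in `S` the target lies in `S ∪ τ⁻¹S`. -/
noncomputable def IsSlice (C : Set Q.A) (S : Set (Q.V × ℤ)) : Prop :=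
  (∀ x : Q.V, ∃! ℓ : ℤ, (x, ℓ) ∈ S) ∧
  ∀ e : Q.A × ℤ, (Q.cover C).s e ∈ S →
    ((Q.cover C).t e ∈ S ∨ (((Q.cover C).t e).1, ((Q.cover C).t e).2 + 1) ∈ S)

/-- The cut `C_S := Q₁ \ π(S₁)` associated with a slice `S`. -/
noncomputable def cutOf (C : Set Q.A) (S : Set (Q.V × ℤ)) : Set Q.A :=
  {a : Q.A | a ∉ (fun e : Q.A × ℤ => e.1) '' Q.sliceArrows C S}

end PreQuiver

namespace PreQuiver

variable (Q : PreQuiver)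

/-- Inverse of a step. -/
def stepInv (e : Q.Step) : Q.Step := (e.1, !e.2)

lemma stepSrc_inv (e : Q.Step) : Q.stepSrc (Q.stepInv e) = Q.stepTgt e := by
  obtain ⟨a, b⟩ := e; cases b <;> simp [stepInv, stepSrc, stepTgt]

lemma stepTgt_inv (e : Q.Step) : Q.stepTgt (Q.stepInv e) = Q.stepSrc e := by
  obtain ⟨a, b⟩ := e; cases b <;> simp [stepInv, stepSrc, stepTgt]

lemma gStep_inv (C : Set Q.A) (e : Q.Step) : Q.gStep C (Q.stepInv e) = -Q.gStep C e := by
  obtain ⟨a, b⟩ := e; cases b <;> simp [stepInv, gStep]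

lemma isWalk_nil {x y : Q.V} (h : Q.IsWalk x y []) : x = y := h

lemma isWalk_append {x y z : Q.V} {l₁ l₂ : List Q.Step}
    (h₁ : Q.IsWalk x y l₁) (h₂ : Q.IsWalk y z l₂) : Q.IsWalk x z (l₁ ++ l₂) := by
  induction l₁ generalizing x with
  | nil => rw [Q.isWalk_nil h₁]; simpa using h₂
  | cons e l ih => exact ⟨h₁.1, ih h₁.2⟩

lemma isWalk_reverse {x y : Q.V} {l : List Q.Step} (h : Q.IsWalk x y l) :
    Q.IsWalk y x (l.reverse.map Q.stepInv) := by
  induction l generalizing x with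
  | nil => exact (Q.isWalk_nil h).symm
  | cons e l ih =>
    simp only [List.reverse_cons, List.map_append, List.map_cons, List.map_nil]
    exact Q.isWalk_append (ih h.2) ⟨Q.stepSrc_inv e, (Q.stepTgt_inv e).trans h.1⟩

lemma gWalk_nil (C : Set Q.A) : Q.gWalk C [] = 0 := rfl

lemma gWalk_cons (C : Set Q.A) (e : Q.Step) (l : List Q.Step) :
    Q.gWalk C (e :: l) = Q.gStep C e + Q.gWalk C l := by simp [gWalk]

lemma gWalk_append (C : Set Q.A) (l₁ l₂ : List Q.Step) :
    Q.gWalk C (l₁ ++ l₂) = Q.gWalk C l₁ + Q.gWalk C l₂ := by simp [gWalk]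

lemma gWalk_reverse (C : Set Q.A) (l : List Q.Step) :
    Q.gWalk C (l.reverse.map Q.stepInv) = -Q.gWalk C l := by
  induction l with
  | nil => simp [gWalk]
  | cons e l ih =>
    simp only [List.reverse_cons, List.map_append, List.map_cons, List.map_nil,
      gWalk_append, gWalk_cons, gWalk_nil, gStep_inv, ih]
    ring

lemma gA_of_mem {C : Set Q.A} {a : Q.A} (h : a ∈ C) : Q.gA C a = 1 := by simp [gA, h]

lemma gA_of_not_mem {C : Set Q.A} {a : Q.A} (h : a ∉ C) : Q.gA C a = 0 := by simp [gA, h]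

lemma gA_mem_pair (C : Set Q.A) (a : Q.A) : Q.gA C a = 0 ∨ Q.gA C a = 1 := by
  rcases Classical.em (a ∈ C) with h | h
  · exact Or.inr (Q.gA_of_mem h)
  · exact Or.inl (Q.gA_of_not_mem h)

/-- Telescoping: if `g_{C'}` differs from `g_C` by a coboundary `f`, the same holds for walks. -/
lemma gWalk_coboundary {C C' : Set Q.A} {f : Q.V → ℤ}
    (hstep : ∀ a : Q.A, Q.gA C' a = Q.gA C a + f (Q.t a) - f (Q.s a)) :
    ∀ {l : List Q.Step} {x y : Q.V}, Q.IsWalk x y l →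
      Q.gWalk C' l = Q.gWalk C l + f y - f x := by
  intro l
  induction l with
  | nil => intro x y h; rw [Q.isWalk_nil h]; simp [gWalk]
  | cons e l ih =>
    intro x y h
    obtain ⟨hs, hw⟩ := h
    have he : Q.gStep C' e = Q.gStep C e + f (Q.stepTgt e) - f (Q.stepSrc e) := by
      obtain ⟨a, b⟩ := e
      cases b <;> simp only [gStep, stepSrc, stepTgt, if_true, if_false, Bool.false_eq_true,
        ite_true, ite_false] <;> [skip; skip] <;> rw [hstep a] <;> ring
    rw [Q.gWalk_cons, Q.gWalk_cons, ih hw, he, hs]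
    ring

/-- Membership in the cut in terms of the level function of `S`. -/
lemma mem_cutOf_iff {C : Set Q.A} {S : Set (Q.V × ℤ)} {f : Q.V → ℤ}
    (hf : ∀ x m, (x, m) ∈ S ↔ m = f x) (a : Q.A) :
    a ∈ Q.cutOf C S ↔ f (Q.t a) ≠ f (Q.s a) - Q.gA C a := by
  constructor
  · intro h hne
    exact h ⟨(a, f (Q.s a)), ⟨(hf _ _).2 rfl, (hf _ _).2 hne.symm⟩, rfl⟩
  · rintro hne ⟨⟨b, ℓ⟩, ⟨hsb, htb⟩, rfl⟩
    have h1 : ℓ = f (Q.s b) := (hf _ _).1 hsb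
    have h2 : ℓ - Q.gA C b = f (Q.t b) := (hf _ _).1 htb
    exact hne (by rw [← h2, h1])

/-- For a slice `S` with level function `f`, the degree of the cut is the twisted degree. -/
lemma gA_cutOf {C : Set Q.A} {S : Set (Q.V × ℤ)} (hS : Q.IsSlice C S) {f : Q.V → ℤ}
    (hf : ∀ x m, (x, m) ∈ S ↔ m = f x) (a : Q.A) :
    Q.gA (Q.cutOf C S) a = Q.gA C a + f (Q.t a) - f (Q.s a) := by
  have harr := hS.2 (a, f (Q.s a)) ((hf _ _).2 rfl)
  simp only [cover] at harr
  have hd : f (Q.t a) = f (Q.s a) - Q.gA C a ∨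
      f (Q.t a) = f (Q.s a) - Q.gA C a + 1 := by
    rcases harr with h | h
    · exact Or.inl ((hf _ _).1 h).symm
    · exact Or.inr ((hf _ _).1 h).symm
  rcases hd with h | h
  · have : a ∉ Q.cutOf C S := by rw [Q.mem_cutOf_iff hf]; simpa using h
    rw [Q.gA_of_not_mem this, h]; ring
  · have : a ∈ Q.cutOf C S := by rw [Q.mem_cutOf_iff hf]; omega
    rw [Q.gA_of_mem this, h]; ring

/-- The level function of a slice. -/
noncomputable def sliceFun {C : Set Q.A} {S : Set (Q.V × ℤ)} (hS : Q.IsSlice C S)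
    (x : Q.V) : ℤ := (hS.1 x).choose

lemma sliceFun_spec {C : Set Q.A} {S : Set (Q.V × ℤ)} (hS : Q.IsSlice C S)
    (x : Q.V) (m : ℤ) : (x, m) ∈ S ↔ m = Q.sliceFun hS x := by
  obtain ⟨h1, h2⟩ := (hS.1 x).choose_spec
  exact ⟨fun h => h2 m h, fun h => h ▸ h1⟩

lemma stepSrc_true (a : Q.A) : Q.stepSrc (a, true) = Q.s a := rfl
lemma stepSrc_false (a : Q.A) : Q.stepSrc (a, false) = Q.t a := rfl
lemma stepTgt_true (a : Q.A) : Q.stepTgt (a, true) = Q.t a := rfl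
lemma stepTgt_false (a : Q.A) : Q.stepTgt (a, false) = Q.s a := rfl
lemma gStep_true (C : Set Q.A) (a : Q.A) : Q.gStep C (a, true) = Q.gA C a := rfl
lemma gStep_false (C : Set Q.A) (a : Q.A) : Q.gStep C (a, false) = -Q.gA C a := rfl

lemma mem_shift {S : Set (Q.V × ℤ)} {ℓ : ℤ} {x : Q.V} {m : ℤ} :
    (x, m) ∈ (fun v : Q.V × ℤ => (v.1, v.2 + ℓ)) '' S ↔ (x, m - ℓ) ∈ S := by
  constructor
  · rintro ⟨⟨y, k⟩, hy, h⟩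
    simp only [Prod.mk.injEq] at h
    obtain ⟨rfl, hk⟩ := h
    have : k = m - ℓ := by omega
    exact this ▸ hy
  · intro h
    exact ⟨(x, m - ℓ), h, by simp⟩

end PreQuiver

/-- cut-slice correspondence: Let `(Q,C)` be a truncated quiver with `Q` connected.
The assignment `S ↦ C_S := Q₁ \ π(S₁)` induces a bijection from slices of `ℤ(Q,C)` modulo `τ`
to the subsets of `Q₁` compatible with `C`; i.e. `C_S` is compatible with `C` and invariant under
replacing `S` by `τ^ℓ S`, every subset compatible with `C` arises as some `C_S`, and
`C_S = C_{S'}` forces `S' = τ^ℓ S` for some `ℓ ∈ ℤ`.  Moreover `π` induces an isomorphism of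
quivers `S → Q_{C_S}`: it is bijective from the vertices of `S` onto `Q₀` and from the arrows of
`S` onto the arrows `Q₁ \ C_S` of `Q_{C_S}` (it commutes with sources and targets by
construction). -/
theorem stmt_4 (Q : PreQuiver) [Finite Q.V] [Finite Q.A] (C : Set Q.A)
    (hconn : Q.Connected) :
    (∀ S : Set (Q.V × ℤ), Q.IsSlice C S → Q.Compatible C (Q.cutOf C S)) ∧
    (∀ (S : Set (Q.V × ℤ)) (ℓ : ℤ), Q.IsSlice C S →
      Q.cutOf C ((fun v : Q.V × ℤ => (v.1, v.2 + ℓ)) '' S) = Q.cutOf C S) ∧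
    (∀ C' : Set Q.A, Q.Compatible C C' →
      ∃ S : Set (Q.V × ℤ), Q.IsSlice C S ∧ Q.cutOf C S = C') ∧
    (∀ S S' : Set (Q.V × ℤ), Q.IsSlice C S → Q.IsSlice C S' →
      Q.cutOf C S = Q.cutOf C S' →
      ∃ ℓ : ℤ, S' = (fun v : Q.V × ℤ => (v.1, v.2 + ℓ)) '' S) ∧
    (∀ S : Set (Q.V × ℤ), Q.IsSlice C S →
      Set.BijOn (fun v : Q.V × ℤ => v.1) S Set.univ ∧
      Set.BijOn (fun e : Q.A × ℤ => e.1) (Q.sliceArrows C S)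
        {a : Q.A | a ∉ Q.cutOf C S}) := by
  refine ⟨?_, ?_, ?_, ?_, ?_⟩
  · -- Part 1: compatibility of the cut
    intro S hS x l hl
    have hf := Q.sliceFun_spec hS
    have := Q.gWalk_coboundary (Q.gA_cutOf hS hf) hl
    omega
  · -- Part 2: τ-invariance of the cut
    intro S ℓ hS
    have hf := Q.sliceFun_spec hS
    have hf' : ∀ x m, (x, m) ∈ (fun v : Q.V × ℤ => (v.1, v.2 + ℓ)) '' S ↔
        m = Q.sliceFun hS x + ℓ := by
      intro x m
      rw [Q.mem_shift, hf]
      omega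
    ext a
    rw [Q.mem_cutOf_iff hf', Q.mem_cutOf_iff hf]
    omega
  · -- Part 3: surjectivity
    intro C' hcomp
    rcases isEmpty_or_nonempty Q.V with hV | hV
    · refine ⟨∅, ⟨fun x => isEmptyElim x, fun e _ => isEmptyElim (Q.s e.1)⟩, ?_⟩
      ext a
      exact isEmptyElim (Q.s a)
    · obtain ⟨x₀⟩ := hV
      set f : Q.V → ℤ := fun y =>
        Q.gWalk C' (hconn x₀ y).choose - Q.gWalk C (hconn x₀ y).choose with hfdef
      have hdiff : ∀ (x y : Q.V) (l : List Q.Step), Q.IsWalk x y l →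
          Q.gWalk C' l - Q.gWalk C l = f y - f x := by
        intro x y l hl
        have hLx := (hconn x₀ x).choose_spec
        have hLy := (hconn x₀ y).choose_spec
        have hcyc : Q.IsWalk x₀ x₀ ((hconn x₀ x).choose ++
            (l ++ ((hconn x₀ y).choose.reverse.map Q.stepInv))) :=
          Q.isWalk_append hLx (Q.isWalk_append hl (Q.isWalk_reverse hLy))
        have := hcomp x₀ _ hcyc
        simp only [PreQuiver.gWalk_append, PreQuiver.gWalk_reverse] at this
        simp only [hfdef]
        linarith
      have hkey : ∀ a : Q.A, Q.gA C' a = Q.gA C a + f (Q.t a) - f (Q.s a) := by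
        intro a
        have hw : Q.IsWalk (Q.s a) (Q.t a) [(a, true)] :=
          ⟨by simp [PreQuiver.stepSrc], by simp [PreQuiver.IsWalk, PreQuiver.stepTgt]⟩
        have := hdiff _ _ _ hw
        simp only [PreQuiver.gWalk, PreQuiver.gStep, List.map_cons, List.map_nil, List.sum_cons,
          List.sum_nil, if_true, add_zero, ite_true] at this
        omega
      refine ⟨{v : Q.V × ℤ | v.2 = f v.1}, ⟨fun x => ⟨f x, rfl, fun m hm => hm⟩, ?_⟩, ?_⟩
      · intro e he
        simp only [PreQuiver.cover, Set.mem_setOf_eq] at he ⊢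
        have h1 := hkey e.1
        rcases Q.gA_mem_pair C' e.1 with h | h <;> omega
      · have hf : ∀ (x : Q.V) (m : ℤ), (x, m) ∈ {v : Q.V × ℤ | v.2 = f v.1} ↔ m = f x :=
          fun x m => Iff.rfl
        ext a
        rw [Q.mem_cutOf_iff hf]
        have h1 := hkey a
        rcases Classical.em (a ∈ C') with h | h
        · have h2 := Q.gA_of_mem h
          simp only [h, iff_true]
          omega
        · have h2 := Q.gA_of_not_mem h
          simp only [h, iff_false, not_not]
          omega
  · -- Part 4: injectivity up to τ
    intro S S' hS hS' hcut
    have hf := Q.sliceFun_spec hS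
    have hf' := Q.sliceFun_spec hS'
    set f := Q.sliceFun hS with hfd
    set f' := Q.sliceFun hS' with hfd'
    have hrel : ∀ a : Q.A, f' (Q.t a) - f' (Q.s a) = f (Q.t a) - f (Q.s a) := by
      intro a
      have h1 := Q.gA_cutOf hS hf a
      have h2 := Q.gA_cutOf hS' hf' a
      rw [hcut] at h1
      omega
    have hconst : ∀ x y : Q.V, f' y - f y = f' x - f x := by
      intro x y
      obtain ⟨l, hl⟩ := hconn x y
      induction l generalizing x with
      | nil => rw [Q.isWalk_nil hl]
      | cons e l ih =>
        have h2 := ih (Q.stepTgt e) hl.2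
        have h3 : f' (Q.stepTgt e) - f (Q.stepTgt e) =
            f' (Q.stepSrc e) - f (Q.stepSrc e) := by
          obtain ⟨a, b⟩ := e
          have := hrel a
          cases b <;> simp only [PreQuiver.stepSrc, PreQuiver.stepTgt, ite_true, ite_false,
            Bool.false_eq_true, if_true, if_false] <;> omega
        rw [h2, h3, hl.1]
    rcases isEmpty_or_nonempty Q.V with hV | hV
    · refine ⟨0, ?_⟩
      ext v
      exact isEmptyElim v.1
    · obtain ⟨x₀⟩ := hV
      refine ⟨f' x₀ - f x₀, ?_⟩
      ext ⟨x, m⟩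
      rw [Q.mem_shift, hf, hf']
      have := hconst x₀ x
      omega
  · -- Part 5: π induces an isomorphism from S to Q_{C_S}
    intro S hS
    have hf := Q.sliceFun_spec hS
    constructor
    · refine ⟨fun v _ => trivial, ?_, ?_⟩
      · rintro ⟨x, m⟩ hv ⟨x', m'⟩ hv' (h : x = x')
        subst h
        have h1 := (hf x m).1 hv
        have h2 := (hf x m').1 hv'
        exact Prod.ext rfl (h1.trans h2.symm)
      · intro x _
        exact ⟨(x, Q.sliceFun hS x), (hf x _).2 rfl, rfl⟩
    · refine ⟨?_, ?_, ?_⟩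
      · intro e he hc
        exact hc ⟨e, he, rfl⟩
      · rintro ⟨a, ℓ⟩ he ⟨a', ℓ'⟩ he' (h : a = a')
        subst h
        simp only [PreQuiver.sliceArrows, PreQuiver.cover, Set.mem_setOf_eq] at he he'
        have h1 := (hf _ _).1 he.1
        have h2 := (hf _ _).1 he'.1
        exact Prod.ext rfl (h1.trans h2.symm)
      · intro a ha
        exact not_not.mp ha
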